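/- The anchored decomposition is unique: given $0 \in D$ and $f : D^d \to \mathbb{R}$, there exists exactly one family $(f_\mathfrak{u})_{\mathfrak{u} \subseteq \{1,\ldots,d\}}$ of functions, where $f_\mathfrak{u}$ depends only on the coordinates in $\mathfrak{u}$ and satisfies $f_\mathfrak{u}(\boldsymbol{x}_\mathfrak{u}) = 0$ whenever $x_j = 0$ for some $j \in \mathfrak{u}$, such that $f = \sum_{\mathfrak{u} \subseteq \{1,\ldots,d\}} f_\mathfrak{u}$. -/

import Mathlib

open Finset

section Aux

variable {α : Type*} [DecidableEq α]

lemma sdiff_insert_insert {a : α} {u v : Finset α} (hau : a ∉ u) (_hav : a ∉ v) :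
    insert a u \ insert a v = u \ v := by
  rw [Finset.insert_sdiff_insert]
  ext x
  simp only [Finset.mem_sdiff, Finset.mem_insert, not_or]
  constructor
  · rintro ⟨hx, _, hv⟩; exact ⟨hx, hv⟩
  · rintro ⟨hx, hv⟩; exact ⟨hx, fun h => hau (h ▸ hx), hv⟩

lemma moebius_aux (w : Finset α) :
    ∀ h : Finset α → ℝ,
      ∑ u ∈ w.powerset, ∑ v ∈ u.powerset, (-1 : ℝ) ^ ((u \ v).card) * h v = h w := by
  induction w using Finset.induction_on with
  | empty => intro h; simp
  | insert _ _ ha ih =>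
    rename_i a s
    intro h
    rw [Finset.sum_powerset_insert ha]
    have key : ∀ u ∈ s.powerset,
        (∑ v ∈ u.powerset, (-1 : ℝ) ^ ((u \ v).card) * h v)
          + ∑ v ∈ (insert a u).powerset, (-1 : ℝ) ^ (((insert a u) \ v).card) * h v
        = ∑ v ∈ u.powerset, (-1 : ℝ) ^ ((u \ v).card) * h (insert a v) := by
      intro u hu
      have hau : a ∉ u := fun h' => ha (Finset.mem_powerset.1 hu h')
      rw [Finset.sum_powerset_insert hau]
      have e1 : ∀ v ∈ u.powerset,
          (-1 : ℝ) ^ (((insert a u) \ v).card) * h v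
            = -((-1 : ℝ) ^ ((u \ v).card) * h v) := by
        intro v hv
        have hav : a ∉ v := fun h' => hau (Finset.mem_powerset.1 hv h')
        rw [Finset.insert_sdiff_of_notMem _ hav,
          Finset.card_insert_of_notMem (by simp [hau])]
        ring
      have e2 : ∀ v ∈ u.powerset,
          (-1 : ℝ) ^ (((insert a u) \ insert a v).card) * h (insert a v)
            = (-1 : ℝ) ^ ((u \ v).card) * h (insert a v) := by
        intro v hv
        have hav : a ∉ v := fun h' => hau (Finset.mem_powerset.1 hv h')
        rw [sdiff_insert_insert hau hav]
      rw [Finset.sum_congr rfl e1, Finset.sum_congr rfl e2, Finset.sum_neg_distrib]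
      ring
    rw [← Finset.sum_add_distrib, Finset.sum_congr rfl key,
      ih (fun v => h (insert a v))]

end Aux

/-- Uniqueness of the anchored decomposition with anchor `0`: every `f : D^d → ℝ` admits
exactly one family `(f_u)_{u ⊆ {1,…,d}}` such that each `f_u` depends only on the
coordinates in `u`, vanishes whenever some coordinate indexed by `u` equals `0`, and
`f = ∑_u f_u`. -/
theorem stmt_18 {D : Type*} [Zero D] (d : ℕ) (f : (Fin d → D) → ℝ) :
    ∃! F : Finset (Fin d) → (Fin d → D) → ℝ,
      (∀ u x y, (∀ j ∈ u, x j = y j) → F u x = F u y) ∧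
      (∀ u x, (∃ j ∈ u, x j = 0) → F u x = 0) ∧
      (∀ x, f x = ∑ u ∈ (univ : Finset (Finset (Fin d))), F u x) := by
  classical
  -- restriction operator
  set r : Finset (Fin d) → (Fin d → D) → (Fin d → D) :=
    fun v x j => if j ∈ v then x j else 0 with hr
  set F : Finset (Fin d) → (Fin d → D) → ℝ :=
    fun u x => ∑ v ∈ u.powerset, (-1 : ℝ) ^ ((u \ v).card) * f (r v x) with hF
  have hFdep : ∀ u x y, (∀ j ∈ u, x j = y j) → F u x = F u y := by
    intro u x y hxy
    refine Finset.sum_congr rfl fun v hv => ?_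
    have hvu := Finset.mem_powerset.1 hv
    congr 1
    congr 1
    funext j
    simp only [hr]
    by_cases hj : j ∈ v
    · simp [hj, hxy j (hvu hj)]
    · simp [hj]
  have hFvan : ∀ u x, (∃ j ∈ u, x j = 0) → F u x = 0 := by
    intro u x ⟨j, hju, hxj⟩
    have hju' : j ∉ u.erase j := Finset.notMem_erase j u
    have hins : u = insert j (u.erase j) := (Finset.insert_erase hju).symm
    rw [hF]
    simp only
    rw [hins, Finset.sum_powerset_insert hju']
    set s := u.erase j
    have key : ∀ v ∈ s.powerset,
        (-1 : ℝ) ^ (((insert j s) \ v).card) * f (r v x)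
          + (-1 : ℝ) ^ (((insert j s) \ insert j v).card) * f (r (insert j v) x) = 0 := by
      intro v hv
      have hjv : j ∉ v := fun h' => hju' (Finset.mem_powerset.1 hv h')
      have hrx : r (insert j v) x = r v x := by
        funext j'
        simp only [hr]
        by_cases hj' : j' = j
        · subst hj'; simp [hjv, hxj]
        · simp [Finset.mem_insert, hj']
      rw [hrx, Finset.insert_sdiff_of_notMem _ hjv,
        Finset.card_insert_of_notMem (by simp [hju']),
        sdiff_insert_insert hju' hjv]
      ring
    rw [← Finset.sum_add_distrib, Finset.sum_congr rfl key]
    simp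
  have hFsum : ∀ x, f x = ∑ u ∈ (univ : Finset (Finset (Fin d))), F u x := by
    intro x
    have : (univ : Finset (Finset (Fin d))) = (univ : Finset (Fin d)).powerset := by
      simp [Finset.powerset_univ]
    rw [this, hF]
    simp only
    rw [moebius_aux (univ : Finset (Fin d)) (fun v => f (r v x))]
    congr 1
    funext j
    simp [hr]
  refine ⟨F, ⟨hFdep, hFvan, hFsum⟩, ?_⟩
  -- uniqueness
  rintro G ⟨Gdep, Gvan, Gsum⟩
  funext u
  induction u using Finset.strongInduction with
  | _ u ih =>
    funext x
    set x' : Fin d → D := fun j => if j ∈ u then x j else 0 with hx'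
    have hGx : G u x = G u x' := Gdep u x x' (fun j hj => by simp [hx', hj])
    have hFx : F u x = F u x' := hFdep u x x' (fun j hj => by simp [hx', hj])
    have trunc : ∀ (H : Finset (Fin d) → (Fin d → D) → ℝ),
        (∀ u x, (∃ j ∈ u, x j = 0) → H u x = 0) →
        (∀ x, f x = ∑ w ∈ (univ : Finset (Finset (Fin d))), H w x) →
        ∑ w ∈ u.powerset, H w x' = f x' := by
      intro H Hvan Hsum
      rw [Hsum x']
      refine Finset.sum_subset (Finset.subset_univ _) ?_
      intro w _ hw
      obtain ⟨j, hjw, hju⟩ := Finset.not_subset.1 (fun h => hw (Finset.mem_powerset.2 h))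
      exact Hvan w x' ⟨j, hjw, by simp [hx', hju]⟩
    have hG := trunc G Gvan Gsum
    have hFt := trunc F hFvan hFsum
    have hGe : G u x' + ∑ w ∈ u.powerset.erase u, G w x' = f x' := by
      have h2 := Finset.add_sum_erase u.powerset (fun w => G w x') (Finset.mem_powerset_self u)
      rw [h2]; exact hG
    have hFe : F u x' + ∑ w ∈ u.powerset.erase u, F w x' = f x' := by
      have h2 := Finset.add_sum_erase u.powerset (fun w => F w x') (Finset.mem_powerset_self u)
      rw [h2]; exact hFt
    have hEr : ∑ w ∈ u.powerset.erase u, G w x' = ∑ w ∈ u.powerset.erase u, F w x' := by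
      refine Finset.sum_congr rfl fun w hw => ?_
      have hwu : w ⊂ u := by
        rcases Finset.mem_erase.1 hw with ⟨hne, hmem⟩
        exact lt_of_le_of_ne (Finset.mem_powerset.1 hmem) hne
      exact congrFun (ih w hwu) x'
    rw [hGx, hFx]
    linarith
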